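/- Let K ⊂ ℝ³ be a centrally symmetric convex body which is strongly convex with smooth boundary (K ∈ 𝒦̂). Then Θ(Z(π)K) = π − Θ(K), Φ(Z(π)K) = Φ(K), Ψ(Z(π)K) = π − Ψ(K), and F(Z(π)K) = −F(K), G(Z(π)K) = G(K), H(Z(π)K) = −H(K). -/

import Mathlib

open MeasureTheory Real Set
open scoped RealInnerProductSpace

noncomputable section

/-- Euclidean 3-space. -/
abbrev E3 := EuclideanSpace ℝ (Fin 3)

/-- The point `(a, b, c)` of `ℝ³`. -/
def pt (a b c : ℝ) : E3 := (WithLp.equiv 2 (Fin 3 → ℝ)).symm ![a, b, c]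

/-- The polar body `K° = {y : ⟪x, y⟫ ≤ 1 for all x ∈ K}`. -/
def polarBody (K : Set E3) : Set E3 := {y : E3 | ∀ x ∈ K, ⟪x, y⟫ ≤ 1}

/-- The radial function `ρ_K(x) = max {t ≥ 0 : t • x ∈ K}`. -/
def radial (K : Set E3) (x : E3) : ℝ := sSup {t : ℝ | 0 ≤ t ∧ t • x ∈ K}

/-- The spherical parametrization `P(α, β)`. -/
def sphP (α β : ℝ) : E3 := pt (cos α) (sin α * cos β) (sin α * sin β)

/-- Rotation by angle `θ` about the `x`-axis. -/
def rotX (θ : ℝ) (p : E3) : E3 :=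
  pt (p 0) (cos θ * p 1 - sin θ * p 2) (sin θ * p 1 + cos θ * p 2)

/-- Rotation by angle `φ` about the `y`-axis. -/
def rotY (φ : ℝ) (p : E3) : E3 :=
  pt (cos φ * p 0 + sin φ * p 2) (p 1) (-sin φ * p 0 + cos φ * p 2)

/-- Rotation by angle `ψ` about the `z`-axis. -/
def rotZ (ψ : ℝ) (p : E3) : E3 :=
  pt (cos ψ * p 0 - sin ψ * p 1) (sin ψ * p 0 + cos ψ * p 1) (p 2)

/-- `K ∈ 𝒦̂`: a centrally symmetric convex body in `ℝ³` which is strongly convex with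
smooth boundary, i.e. `h_K = gauge²/2` is `C^∞` away from the origin and has positive
definite Hessian at every point of the unit sphere. -/
def IsKhat (K : Set E3) : Prop :=
  IsCompact K ∧ Convex ℝ K ∧ (interior K).Nonempty ∧ K = -K ∧
    ContDiffOn ℝ (⊤ : ℕ∞) (fun x => gauge K x ^ 2 / 2) {0}ᶜ ∧
    ∀ x : E3, ‖x‖ = 1 → ∀ v : E3, v ≠ 0 →
      0 < fderiv ℝ (fderiv ℝ (fun y => gauge K y ^ 2 / 2)) x v v

/-- `Θ` satisfies the defining property of `Θ(K)`. -/
def ThetaEq (K : Set E3) (Θ : ℝ) : Prop :=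
  Θ ∈ Ioo 0 π ∧
    ∫ β in (0:ℝ)..Θ, ∫ α in (0:ℝ)..π, radial K (sphP α β) ^ 3 * sin α
      = ∫ β in Θ..π, ∫ α in (0:ℝ)..π, radial K (sphP α β) ^ 3 * sin α

/-- `Φ` satisfies the defining property of `Φ(K)`. -/
def PhiEq (K : Set E3) (Φ : ℝ) : Prop :=
  Φ ∈ Ioo 0 π ∧
    ∫ α in (0:ℝ)..Φ, radial K (sphP α 0) ^ 2 = ∫ α in Φ..π, radial K (sphP α 0) ^ 2

/-- `Ψ` satisfies the defining property of `Ψ(K)`, where `Θ = Θ(K)`. -/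
def PsiEq (K : Set E3) (Θ Ψ : ℝ) : Prop :=
  Ψ ∈ Ioo 0 π ∧
    ∫ α in (0:ℝ)..Ψ, radial K (sphP α Θ) ^ 2 = ∫ α in Ψ..π, radial K (sphP α Θ) ^ 2

/-- The unitriangular map whose inverse is the matrix `𝒜(K)` (for `Θ = Θ(K)`, `Φ = Φ(K)`,
`Ψ = Ψ(K)`); thus the body `𝒜(K) K` is the preimage `shear Θ Φ Ψ ⁻¹' K`. -/
def shear (Θ Φ Ψ : ℝ) (p : E3) : E3 :=
  pt (p 0 + p 1 / tan Φ + p 2 / (sin Θ * tan Ψ)) (p 1 + p 2 / tan Θ) (p 2)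

/-- `v₁ = vol(L ∩ {x ≥ 0, y ≥ 0, z ≥ 0})`. -/
def vol₁ (L : Set E3) : ℝ := (volume (L ∩ {p : E3 | 0 ≤ p 0 ∧ 0 ≤ p 1 ∧ 0 ≤ p 2})).toReal

/-- `v₂ = vol(L ∩ {x ≤ 0, y ≥ 0, z ≥ 0})`. -/
def vol₂ (L : Set E3) : ℝ := (volume (L ∩ {p : E3 | p 0 ≤ 0 ∧ 0 ≤ p 1 ∧ 0 ≤ p 2})).toReal

/-- `v₃ = vol(L ∩ {x ≤ 0, y ≤ 0, z ≥ 0})`. -/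
def vol₃ (L : Set E3) : ℝ := (volume (L ∩ {p : E3 | p 0 ≤ 0 ∧ p 1 ≤ 0 ∧ 0 ≤ p 2})).toReal

/-- `v₄ = vol(L ∩ {x ≥ 0, y ≤ 0, z ≥ 0})`. -/
def vol₄ (L : Set E3) : ℝ := (volume (L ∩ {p : E3 | 0 ≤ p 0 ∧ p 1 ≤ 0 ∧ 0 ≤ p 2})).toReal

/-- `F` applied to the transformed body `L' = 𝒜(K) K`. -/
def Ffun (L : Set E3) : ℝ :=
  (μH[2] (L ∩ {p : E3 | p 0 = 0 ∧ 0 ≤ p 1 ∧ 0 ≤ p 2})).toReal -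
    (μH[2] (L ∩ {p : E3 | p 0 = 0 ∧ p 1 ≤ 0 ∧ 0 ≤ p 2})).toReal

/-- `G = v₁ + v₃ - v₂ - v₄` applied to the transformed body `L' = 𝒜(K) K`. -/
def Gfun (L : Set E3) : ℝ := vol₁ L + vol₃ L - vol₂ L - vol₄ L

/-- `H = v₁ + v₄ - v₂ - v₃` applied to the transformed body `L' = 𝒜(K) K`. -/
def Hfun (L : Set E3) : ℝ := vol₁ L + vol₄ L - vol₂ L - vol₃ L

/-- Condition (★). -/
def StarCond (K : Set E3) : Prop :=
  volume (K ∩ {p : E3 | 0 ≤ p 0 ∧ 0 ≤ p 1 ∧ 0 ≤ p 2})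
      = volume (K ∩ {p : E3 | p 0 ≤ 0 ∧ 0 ≤ p 1 ∧ 0 ≤ p 2}) ∧
    volume (K ∩ {p : E3 | p 0 ≤ 0 ∧ 0 ≤ p 1 ∧ 0 ≤ p 2})
      = volume (K ∩ {p : E3 | p 0 ≤ 0 ∧ p 1 ≤ 0 ∧ 0 ≤ p 2}) ∧
    volume (K ∩ {p : E3 | p 0 ≤ 0 ∧ p 1 ≤ 0 ∧ 0 ≤ p 2})
      = volume (K ∩ {p : E3 | 0 ≤ p 0 ∧ p 1 ≤ 0 ∧ 0 ≤ p 2}) ∧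
    μH[2] (K ∩ {p : E3 | p 0 = 0 ∧ 0 ≤ p 1 ∧ 0 ≤ p 2})
      = μH[2] (K ∩ {p : E3 | p 0 = 0 ∧ p 1 ≤ 0 ∧ 0 ≤ p 2}) ∧
    μH[2] (K ∩ {p : E3 | p 1 = 0 ∧ 0 ≤ p 0 ∧ 0 ≤ p 2})
      = μH[2] (K ∩ {p : E3 | p 1 = 0 ∧ 0 ≤ p 0 ∧ p 2 ≤ 0}) ∧
    μH[2] (K ∩ {p : E3 | p 2 = 0 ∧ 0 ≤ p 0 ∧ 0 ≤ p 1})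
      = μH[2] (K ∩ {p : E3 | p 2 = 0 ∧ p 0 ≤ 0 ∧ 0 ≤ p 1})

/-- The cube `[-1,1]³`. -/
def cube : Set E3 := {x : E3 | ∀ i, x i ∈ Icc (-1:ℝ) 1}

/-- The cross product on `ℝ³`. -/
def cross (a b : E3) : E3 :=
  pt (a 1 * b 2 - a 2 * b 1) (a 2 * b 0 - a 0 * b 2) (a 0 * b 1 - a 1 * b 0)


/-! ### Auxiliary lemmas -/

@[simp] lemma pt_apply_0 (a b c : ℝ) : pt a b c 0 = a := rfl
@[simp] lemma pt_apply_1 (a b c : ℝ) : pt a b c 1 = b := rfl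
@[simp] lemma pt_apply_2 (a b c : ℝ) : pt a b c 2 = c := rfl

lemma E3_ext {p q : E3} (h0 : p 0 = q 0) (h1 : p 1 = q 1) (h2 : p 2 = q 2) : p = q := by
  ext i; fin_cases i <;> assumption

lemma continuous_pt {X : Type*} [TopologicalSpace X] {f g h : X → ℝ}
    (hf : Continuous f) (hg : Continuous g) (hh : Continuous h) :
    Continuous fun x => pt (f x) (g x) (h x) := by
  show Continuous fun x => (WithLp.equiv 2 (Fin 3 → ℝ)).symm ![f x, g x, h x]
  have hc : Continuous fun v : Fin 3 → ℝ => (WithLp.equiv 2 (Fin 3 → ℝ)).symm v :=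
    PiLp.continuous_toLp 2 (fun _ : Fin 3 => ℝ)
  refine hc.comp (continuous_pi ?_)
  intro i; fin_cases i <;> simpa

section RadialLemmas
open Topology Filter
variable {K : Set E3}

lemma IsKhat.zero_mem_interior (hK : IsKhat K) : (0:E3) ∈ interior K := by
  obtain ⟨hcomp, hconv, ⟨x, hx⟩, hsymm, -⟩ := hK
  have h2 : interior (-K) = -interior K := by
    rw [show (-K : Set E3) = (Homeomorph.neg E3) ⁻¹' K from rfl,
      ← Homeomorph.preimage_interior]
    rfl
  have hx' : -x ∈ interior K := by
    rw [hsymm, h2]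
    exact Set.neg_mem_neg.2 hx
  have h := hconv.interior hx hx' (by norm_num : (0:ℝ) ≤ 1/2) (by norm_num : (0:ℝ) ≤ 1/2)
    (by norm_num)
  simpa using h

lemma IsKhat.memNhds (hK : IsKhat K) : K ∈ 𝓝 (0:E3) :=
  mem_interior_iff_mem_nhds.1 hK.zero_mem_interior

lemma IsKhat.vonN (hK : IsKhat K) : Bornology.IsVonNBounded ℝ K :=
  (NormedSpace.isVonNBounded_iff ℝ).2 hK.1.isBounded

lemma radial_eq_inv_gauge (hK : IsKhat K) {x : E3} (hx : x ≠ 0) :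
    radial K x = (gauge K x)⁻¹ := by
  have hconv := hK.2.1
  have hnhds := hK.memNhds
  have habs : Absorbent ℝ K := absorbent_nhds_zero hnhds
  have hg : 0 < gauge K x := (gauge_pos habs hK.vonN).2 hx
  have hcl : closure K = K := hK.1.isClosed.closure_eq
  have hset : {t : ℝ | 0 ≤ t ∧ t • x ∈ K} = Icc 0 (gauge K x)⁻¹ := by
    ext t
    simp only [mem_setOf_eq, mem_Icc]
    constructor
    · rintro ⟨ht, htK⟩
      refine ⟨ht, ?_⟩
      have h1 : gauge K (t • x) ≤ 1 := gauge_le_one_of_mem htK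
      rw [gauge_smul_of_nonneg ht, smul_eq_mul] at h1
      rw [inv_eq_one_div, le_div_iff₀ hg]
      exact h1
    · rintro ⟨ht, htle⟩
      have h1 : gauge K (t • x) ≤ 1 := by
        rw [gauge_smul_of_nonneg ht, smul_eq_mul]
        rw [inv_eq_one_div, le_div_iff₀ hg] at htle
        exact htle
      refine ⟨ht, ?_⟩
      have := (gauge_le_one_iff_mem_closure hconv hnhds).1 h1
      rwa [hcl] at this
  rw [radial, hset, csSup_Icc (by positivity)]

lemma radial_lower (hK : IsKhat K) : ∃ c > 0, ∀ x : E3, ‖x‖ = 1 → c ≤ radial K x := by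
  obtain ⟨ε, hε, hball⟩ := Metric.mem_nhds_iff.1 hK.memNhds
  obtain ⟨Rb, hRb⟩ := Bornology.IsBounded.exists_norm_le hK.1.isBounded
  refine ⟨ε/2, by positivity, fun x hx => ?_⟩
  have hmem : ε/2 ∈ {t : ℝ | 0 ≤ t ∧ t • x ∈ K} := by
    refine ⟨by positivity, hball ?_⟩
    rw [Metric.mem_ball, dist_zero_right, norm_smul, hx, Real.norm_eq_abs,
      abs_of_nonneg (by positivity : (0:ℝ) ≤ ε/2)]
    linarith
  have hbdd : BddAbove {t : ℝ | 0 ≤ t ∧ t • x ∈ K} := by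
    refine ⟨Rb, fun t ht => ?_⟩
    have := hRb _ ht.2
    rwa [norm_smul, hx, mul_one, Real.norm_eq_abs, abs_of_nonneg ht.1] at this
  exact le_csSup hbdd hmem

lemma radial_cont_comp (hK : IsKhat K) {X : Type*} [TopologicalSpace X] {f : X → E3}
    (hf : Continuous f) (h1 : ∀ x, ‖f x‖ = 1) : Continuous fun x => radial K (f x) := by
  have hconv := hK.2.1
  have hnhds := hK.memNhds
  have habs : Absorbent ℝ K := absorbent_nhds_zero hnhds
  have hne : ∀ x, f x ≠ 0 := by
    intro x h
    have := h1 x; rw [h] at this; simp at this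
  have heq : (fun x => radial K (f x)) = fun x => (gauge K (f x))⁻¹ :=
    funext fun x => radial_eq_inv_gauge hK (hne x)
  rw [heq]
  exact ((continuous_gauge hconv hnhds).comp hf).inv₀
    fun x => ne_of_gt ((gauge_pos habs hK.vonN).2 (hne x))

lemma radial_neg (hsymm : K = -K) (x : E3) : radial K (-x) = radial K x := by
  unfold radial
  congr 1
  ext t
  simp only [mem_setOf_eq, smul_neg]
  constructor
  · rintro ⟨ht, hm⟩
    refine ⟨ht, ?_⟩
    rw [hsymm]; simpa using hm
  · rintro ⟨ht, hm⟩
    refine ⟨ht, ?_⟩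
    rw [hsymm] at hm
    simpa using hm

end RadialLemmas

section BalanceLemmas
open intervalIntegral

lemma balance_le {f : ℝ → ℝ} {c a b : ℝ} (hc : 0 < c)
    (hcf : ∀ x ∈ Icc 0 π, c ≤ f x) (hint : IntervalIntegrable f volume 0 π)
    (ha : a ∈ Ioo 0 π) (hb : b ∈ Ioo 0 π)
    (Ha : ∫ x in (0:ℝ)..a, f x = ∫ x in a..π, f x)
    (Hb : ∫ x in (0:ℝ)..b, f x = ∫ x in b..π, f x) (hab : a ≤ b) : b ≤ a := by
  have hsub : ∀ u v : ℝ, u ∈ Icc (0:ℝ) π → v ∈ Icc (0:ℝ) π →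
      IntervalIntegrable f volume u v := by
    intro u v hu hv
    refine hint.mono_set ?_
    rw [uIcc_of_le pi_pos.le]
    exact uIcc_subset_Icc hu hv
  have haI : a ∈ Icc (0:ℝ) π := ⟨ha.1.le, ha.2.le⟩
  have hbI : b ∈ Icc (0:ℝ) π := ⟨hb.1.le, hb.2.le⟩
  have h0I : (0:ℝ) ∈ Icc (0:ℝ) π := ⟨le_refl _, pi_pos.le⟩
  have hπI : π ∈ Icc (0:ℝ) π := ⟨pi_pos.le, le_refl _⟩
  have h1 := integral_add_adjacent_intervals (hsub 0 a h0I haI) (hsub a b haI hbI)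
  have h2 := integral_add_adjacent_intervals (hsub a b haI hbI) (hsub b π hbI hπI)
  have key : ∫ x in a..b, f x = 0 := by linarith
  have hmono := integral_mono_on hab (_root_.intervalIntegrable_const (c := c))
    (hsub a b haI hbI) (fun x hx => hcf x ⟨le_trans ha.1.le hx.1, le_trans hx.2 hb.2.le⟩)
  rw [intervalIntegral.integral_const, smul_eq_mul] at hmono
  nlinarith

lemma balance_unique {f : ℝ → ℝ} {c a b : ℝ} (hc : 0 < c)
    (hcf : ∀ x ∈ Icc 0 π, c ≤ f x) (hint : IntervalIntegrable f volume 0 π)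
    (ha : a ∈ Ioo 0 π) (hb : b ∈ Ioo 0 π)
    (Ha : ∫ x in (0:ℝ)..a, f x = ∫ x in a..π, f x)
    (Hb : ∫ x in (0:ℝ)..b, f x = ∫ x in b..π, f x) : a = b := by
  rcases le_total a b with h | h
  · exact le_antisymm h (balance_le hc hcf hint ha hb Ha Hb h)
  · exact (le_antisymm h (balance_le hc hcf hint hb ha Hb Ha h)).symm

end BalanceLemmas

section RotLemmas

lemma rotZpi_apply (p : E3) : rotZ π p = pt (-(p 0)) (-(p 1)) (p 2) := by
  unfold rotZ
  norm_num [Real.cos_pi, Real.sin_pi]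

lemma rotZpi_invol (p : E3) : rotZ π (rotZ π p) = p := by
  apply E3_ext <;> simp [rotZpi_apply]

lemma rotZpi_smul (t : ℝ) (p : E3) : rotZ π (t • p) = t • rotZ π p := by
  apply E3_ext <;> simp [rotZpi_apply]

set_option linter.unreachableTactic false in
set_option linter.unusedTactic false in
lemma rotZpi_add (p q : E3) : rotZ π (p + q) = rotZ π p + rotZ π q := by
  apply E3_ext <;> simp [rotZpi_apply] <;> ring

lemma sphP_norm (α β : ℝ) : ‖sphP α β‖ = 1 := by
  rw [show (1:ℝ) = Real.sqrt 1 by simp, EuclideanSpace.norm_eq]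
  congr 1
  simp only [Fin.sum_univ_three, sphP, pt_apply_0, pt_apply_1, pt_apply_2, Real.norm_eq_abs,
    sq_abs]
  have h1 := sin_sq_add_cos_sq α
  have h2 := sin_sq_add_cos_sq β
  nlinarith

lemma rot_sphP (α β : ℝ) : rotZ π (sphP α β) = sphP (π - α) (π - β) := by
  apply E3_ext <;>
    simp [rotZpi_apply, sphP, Real.cos_pi_sub, Real.sin_pi_sub]

lemma rot_sphP0 (α : ℝ) : rotZ π (sphP α 0) = -sphP α 0 := by
  apply E3_ext <;> simp [rotZpi_apply, sphP]

def Rli : E3 ≃ₗᵢ[ℝ] E3 :=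
  { toFun := rotZ π
    invFun := rotZ π
    left_inv := rotZpi_invol
    right_inv := rotZpi_invol
    map_add' := rotZpi_add
    map_smul' := rotZpi_smul
    norm_map' := by
      intro p
      rw [EuclideanSpace.norm_eq, EuclideanSpace.norm_eq]
      congr 1
      simp [Fin.sum_univ_three, rotZpi_apply, Real.norm_eq_abs, sq_abs] }

lemma vol_rot_preimage (s : Set E3) : volume (rotZ π ⁻¹' s) = volume s :=
  Rli.measurePreserving.measure_preimage_emb Rli.toMeasurableEquiv.measurableEmbedding s

lemma hd_rot_preimage (s : Set E3) : μH[2] (rotZ π ⁻¹' s) = μH[2] s := by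
  have h1 : rotZ π ⁻¹' s = rotZ π '' s := by
    ext p
    constructor
    · intro hp; exact ⟨rotZ π p, hp, rotZpi_invol p⟩
    · rintro ⟨q, hq, rfl⟩; rwa [Set.mem_preimage, rotZpi_invol]
  rw [h1]
  exact Rli.isometry.hausdorffMeasure_image (Or.inl (by norm_num)) s

lemma mem_rot_image {K : Set E3} {x : E3} : x ∈ rotZ π '' K ↔ rotZ π x ∈ K := by
  constructor
  · rintro ⟨y, hy, rfl⟩; rwa [rotZpi_invol]
  · intro h; exact ⟨rotZ π x, h, rotZpi_invol x⟩

lemma radial_rot_image (K : Set E3) (x : E3) :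
    radial (rotZ π '' K) x = radial K (rotZ π x) := by
  unfold radial
  congr 1
  ext t
  rw [mem_setOf_eq, mem_setOf_eq, mem_rot_image, rotZpi_smul]

lemma shear_conj (Θ Φ Ψ : ℝ) (p : E3) :
    shear (π - Θ) Φ (π - Ψ) p = rotZ π (shear Θ Φ Ψ (rotZ π p)) := by
  apply E3_ext <;>
    simp [rotZpi_apply, shear, Real.tan_pi_sub, Real.sin_pi_sub, div_neg, mul_neg, neg_div] <;>
    ring

end RotLemmas


section QuadLemmas

lemma rot_pre_set1 : rotZ π ⁻¹' {p : E3 | 0 ≤ p 0 ∧ 0 ≤ p 1 ∧ 0 ≤ p 2}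
    = {p : E3 | p 0 ≤ 0 ∧ p 1 ≤ 0 ∧ 0 ≤ p 2} := by
  ext p; simp [rotZpi_apply]

lemma rot_pre_set2 : rotZ π ⁻¹' {p : E3 | p 0 ≤ 0 ∧ 0 ≤ p 1 ∧ 0 ≤ p 2}
    = {p : E3 | 0 ≤ p 0 ∧ p 1 ≤ 0 ∧ 0 ≤ p 2} := by
  ext p; simp [rotZpi_apply]

lemma rot_pre_set3 : rotZ π ⁻¹' {p : E3 | p 0 ≤ 0 ∧ p 1 ≤ 0 ∧ 0 ≤ p 2}
    = {p : E3 | 0 ≤ p 0 ∧ 0 ≤ p 1 ∧ 0 ≤ p 2} := by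
  ext p; simp [rotZpi_apply]

lemma rot_pre_set4 : rotZ π ⁻¹' {p : E3 | 0 ≤ p 0 ∧ p 1 ≤ 0 ∧ 0 ≤ p 2}
    = {p : E3 | p 0 ≤ 0 ∧ 0 ≤ p 1 ∧ 0 ≤ p 2} := by
  ext p; simp [rotZpi_apply]

lemma rot_pre_fp : rotZ π ⁻¹' {p : E3 | p 0 = 0 ∧ 0 ≤ p 1 ∧ 0 ≤ p 2}
    = {p : E3 | p 0 = 0 ∧ p 1 ≤ 0 ∧ 0 ≤ p 2} := by
  ext p; simp [rotZpi_apply, neg_eq_zero]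

lemma rot_pre_fm : rotZ π ⁻¹' {p : E3 | p 0 = 0 ∧ p 1 ≤ 0 ∧ 0 ≤ p 2}
    = {p : E3 | p 0 = 0 ∧ 0 ≤ p 1 ∧ 0 ≤ p 2} := by
  ext p; simp [rotZpi_apply, neg_eq_zero]

lemma vol1_rot (L : Set E3) : vol₁ (rotZ π ⁻¹' L) = vol₃ L := by
  unfold vol₁ vol₃
  rw [show rotZ π ⁻¹' L ∩ {p : E3 | 0 ≤ p 0 ∧ 0 ≤ p 1 ∧ 0 ≤ p 2}
      = rotZ π ⁻¹' (L ∩ {p : E3 | p 0 ≤ 0 ∧ p 1 ≤ 0 ∧ 0 ≤ p 2}) from by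
    rw [Set.preimage_inter, rot_pre_set3], vol_rot_preimage]

lemma vol2_rot (L : Set E3) : vol₂ (rotZ π ⁻¹' L) = vol₄ L := by
  unfold vol₂ vol₄
  rw [show rotZ π ⁻¹' L ∩ {p : E3 | p 0 ≤ 0 ∧ 0 ≤ p 1 ∧ 0 ≤ p 2}
      = rotZ π ⁻¹' (L ∩ {p : E3 | 0 ≤ p 0 ∧ p 1 ≤ 0 ∧ 0 ≤ p 2}) from by
    rw [Set.preimage_inter, rot_pre_set4], vol_rot_preimage]

lemma vol3_rot (L : Set E3) : vol₃ (rotZ π ⁻¹' L) = vol₁ L := by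
  unfold vol₃ vol₁
  rw [show rotZ π ⁻¹' L ∩ {p : E3 | p 0 ≤ 0 ∧ p 1 ≤ 0 ∧ 0 ≤ p 2}
      = rotZ π ⁻¹' (L ∩ {p : E3 | 0 ≤ p 0 ∧ 0 ≤ p 1 ∧ 0 ≤ p 2}) from by
    rw [Set.preimage_inter, rot_pre_set1], vol_rot_preimage]

lemma vol4_rot (L : Set E3) : vol₄ (rotZ π ⁻¹' L) = vol₂ L := by
  unfold vol₄ vol₂
  rw [show rotZ π ⁻¹' L ∩ {p : E3 | 0 ≤ p 0 ∧ p 1 ≤ 0 ∧ 0 ≤ p 2}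
      = rotZ π ⁻¹' (L ∩ {p : E3 | p 0 ≤ 0 ∧ 0 ≤ p 1 ∧ 0 ≤ p 2}) from by
    rw [Set.preimage_inter, rot_pre_set2], vol_rot_preimage]

lemma Ffun_rot (L : Set E3) : Ffun (rotZ π ⁻¹' L) = -Ffun L := by
  unfold Ffun
  rw [show rotZ π ⁻¹' L ∩ {p : E3 | p 0 = 0 ∧ 0 ≤ p 1 ∧ 0 ≤ p 2}
      = rotZ π ⁻¹' (L ∩ {p : E3 | p 0 = 0 ∧ p 1 ≤ 0 ∧ 0 ≤ p 2}) from by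
    rw [Set.preimage_inter, rot_pre_fm]]
  rw [show rotZ π ⁻¹' L ∩ {p : E3 | p 0 = 0 ∧ p 1 ≤ 0 ∧ 0 ≤ p 2}
      = rotZ π ⁻¹' (L ∩ {p : E3 | p 0 = 0 ∧ 0 ≤ p 1 ∧ 0 ≤ p 2}) from by
    rw [Set.preimage_inter, rot_pre_fp]]
  rw [hd_rot_preimage, hd_rot_preimage]
  ring

lemma Gfun_rot (L : Set E3) : Gfun (rotZ π ⁻¹' L) = Gfun L := by
  unfold Gfun
  rw [vol1_rot, vol2_rot, vol3_rot, vol4_rot]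
  ring

lemma Hfun_rot (L : Set E3) : Hfun (rotZ π ⁻¹' L) = -Hfun L := by
  unfold Hfun
  rw [vol1_rot, vol2_rot, vol3_rot, vol4_rot]
  ring

end QuadLemmas

set_option maxHeartbeats 1000000 in
/-- Lemmas 5.10 and 5.11: for `K ∈ 𝒦̂`, `Θ(Z(π)K) = π − Θ(K)`, `Φ(Z(π)K) = Φ(K)`,
`Ψ(Z(π)K) = π − Ψ(K)`, and `F(Z(π)K) = −F(K)`, `G(Z(π)K) = G(K)`, `H(Z(π)K) = −H(K)`. -/
theorem FGH_rotZ_pi (K : Set E3) (hK : IsKhat K)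
    (Θ Φ Ψ : ℝ) (hΘ : ThetaEq K Θ) (hΦ : PhiEq K Φ) (hΨ : PsiEq K Θ Ψ)
    (Θ' Φ' Ψ' : ℝ)
    (hΘ' : ThetaEq (rotZ π '' K) Θ')
    (hΦ' : PhiEq (rotZ π '' K) Φ')
    (hΨ' : PsiEq (rotZ π '' K) Θ' Ψ') :
    Θ' = π - Θ ∧ Φ' = Φ ∧ Ψ' = π - Ψ ∧
      Ffun (shear Θ' Φ' Ψ' ⁻¹' (rotZ π '' K)) = -Ffun (shear Θ Φ Ψ ⁻¹' K) ∧
      Gfun (shear Θ' Φ' Ψ' ⁻¹' (rotZ π '' K)) = Gfun (shear Θ Φ Ψ ⁻¹' K) ∧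
      Hfun (shear Θ' Φ' Ψ' ⁻¹' (rotZ π '' K)) = -Hfun (shear Θ Φ Ψ ⁻¹' K) := by
  obtain ⟨c, hc, hcr⟩ := radial_lower hK
  have hsymm : K = -K := hK.2.2.2.1
  -- continuity facts
  have hsphc : Continuous fun q : ℝ × ℝ => sphP q.2 q.1 := by
    unfold sphP
    exact continuous_pt (Real.continuous_cos.comp continuous_snd)
      ((Real.continuous_sin.comp continuous_snd).mul (Real.continuous_cos.comp continuous_fst))
      ((Real.continuous_sin.comp continuous_snd).mul (Real.continuous_sin.comp continuous_fst))
  have hradc2 : Continuous fun q : ℝ × ℝ => radial K (sphP q.2 q.1) :=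
    radial_cont_comp hK hsphc fun q => sphP_norm _ _
  have hcont1 : ∀ β : ℝ, Continuous fun α : ℝ => radial K (sphP α β) := by
    intro β
    have hpair : Continuous fun α : ℝ => ((β, α) : ℝ × ℝ) :=
      continuous_const.prodMk continuous_id
    have := hradc2.comp hpair
    exact this
  have hint3 : ∀ β : ℝ, IntervalIntegrable (fun α => radial K (sphP α β)^3 * sin α)
      volume 0 π :=
    fun β => (((hcont1 β).pow 3).mul Real.continuous_sin).intervalIntegrable 0 π
  have g_low : ∀ β : ℝ, 2*c^3 ≤ ∫ α in (0:ℝ)..π, radial K (sphP α β)^3 * sin α := by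
    intro β
    have hint1 : IntervalIntegrable (fun α => c^3 * sin α) volume 0 π :=
      (continuous_const.mul Real.continuous_sin).intervalIntegrable 0 π
    have hmono := intervalIntegral.integral_mono_on pi_pos.le hint1 (hint3 β) (fun α hα => by
      have h1 : c ≤ radial K (sphP α β) := hcr _ (sphP_norm α β)
      have h2 : (0:ℝ) ≤ sin α := Real.sin_nonneg_of_nonneg_of_le_pi hα.1 hα.2
      have h3 : c^3 ≤ radial K (sphP α β)^3 := pow_le_pow_left₀ hc.le h1 3
      exact mul_le_mul_of_nonneg_right h3 h2)
    have hval : ∫ α in (0:ℝ)..π, c^3 * sin α = 2*c^3 := by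
      rw [intervalIntegral.integral_const_mul, integral_sin]
      norm_num [Real.cos_pi]
      ring
    linarith
  have g_cont : Continuous fun β : ℝ => ∫ α in (0:ℝ)..π, radial K (sphP α β)^3 * sin α := by
    have hunc : Continuous (Function.uncurry
        fun β α : ℝ => radial K (sphP α β)^3 * Real.sin α) :=
      (hradc2.pow 3).mul (Real.continuous_sin.comp continuous_snd)
    exact intervalIntegral.continuous_parametric_intervalIntegral_of_continuous' hunc 0 π
  have hrad' : ∀ x : E3, radial (rotZ π '' K) x = radial K (rotZ π x) := radial_rot_image K
  -- Θ
  obtain ⟨hΘ'm, hΘ'e⟩ := hΘ'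
  have hinner : ∀ β : ℝ, (∫ α in (0:ℝ)..π, radial (rotZ π '' K) (sphP α β)^3 * sin α)
      = ∫ α in (0:ℝ)..π, radial K (sphP α (π - β))^3 * sin α := by
    intro β
    have h1 : (fun α => radial (rotZ π '' K) (sphP α β)^3 * sin α)
        = fun α => (fun u => radial K (sphP u (π - β))^3 * sin u) (π - α) := by
      funext α
      simp only
      rw [hrad', rot_sphP, Real.sin_pi_sub]
    rw [h1, intervalIntegral.integral_comp_sub_left
      (fun u => radial K (sphP u (π - β))^3 * sin u) π]
    norm_num
  simp only [hinner] at hΘ'e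
  have e1 : (∫ β in (0:ℝ)..Θ', ∫ α in (0:ℝ)..π, radial K (sphP α (π - β))^3 * sin α)
      = ∫ b in (π - Θ')..π, ∫ α in (0:ℝ)..π, radial K (sphP α b)^3 * sin α := by
    have h := intervalIntegral.integral_comp_sub_left (a := 0) (b := Θ')
      (fun b => ∫ α in (0:ℝ)..π, radial K (sphP α b)^3 * sin α) π
    simpa using h
  have e2 : (∫ β in Θ'..π, ∫ α in (0:ℝ)..π, radial K (sphP α (π - β))^3 * sin α)
      = ∫ b in (0:ℝ)..(π - Θ'), ∫ α in (0:ℝ)..π, radial K (sphP α b)^3 * sin α := by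
    have h := intervalIntegral.integral_comp_sub_left (a := Θ') (b := π)
      (fun b => ∫ α in (0:ℝ)..π, radial K (sphP α b)^3 * sin α) π
    simpa using h
  rw [e1, e2] at hΘ'e
  have hmemΘ : π - Θ' ∈ Ioo 0 π := ⟨by linarith [hΘ'm.2], by linarith [hΘ'm.1]⟩
  have hΘval : Θ = π - Θ' :=
    balance_unique (c := 2*c^3) (by positivity) (fun β _ => g_low β)
      (g_cont.intervalIntegrable 0 π) hΘ.1 hmemΘ hΘ.2 hΘ'e.symm
  have hΘ'v : Θ' = π - Θ := by linarith
  -- Φ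
  obtain ⟨hΦ'm, hΦ'e⟩ := hΦ'
  have hφr : ∀ α : ℝ, radial (rotZ π '' K) (sphP α 0) = radial K (sphP α 0) := by
    intro α; rw [hrad', rot_sphP0, radial_neg hsymm]
  simp only [hφr] at hΦ'e
  have hΦval : Φ = Φ' :=
    balance_unique (c := c^2) (by positivity)
      (fun α _ => pow_le_pow_left₀ hc.le (hcr _ (sphP_norm α 0)) 2)
      (((hcont1 0).pow 2).intervalIntegrable 0 π) hΦ.1 hΦ'm hΦ.2 hΦ'e
  have hΦ'v : Φ' = Φ := hΦval.symm
  -- Ψ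
  obtain ⟨hΨ'm, hΨ'e⟩ := hΨ'
  rw [hΘ'v] at hΨ'e
  have hψr : ∀ α : ℝ, radial (rotZ π '' K) (sphP α (π - Θ)) = radial K (sphP (π - α) Θ) := by
    intro α; rw [hrad', rot_sphP, sub_sub_cancel]
  simp only [hψr] at hΨ'e
  have f1 : (∫ α in (0:ℝ)..Ψ', radial K (sphP (π - α) Θ)^2)
      = ∫ u in (π - Ψ')..π, radial K (sphP u Θ)^2 := by
    have h := intervalIntegral.integral_comp_sub_left (a := 0) (b := Ψ')
      (fun u => radial K (sphP u Θ)^2) π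
    simpa using h
  have f2 : (∫ α in Ψ'..π, radial K (sphP (π - α) Θ)^2)
      = ∫ u in (0:ℝ)..(π - Ψ'), radial K (sphP u Θ)^2 := by
    have h := intervalIntegral.integral_comp_sub_left (a := Ψ') (b := π)
      (fun u => radial K (sphP u Θ)^2) π
    simpa using h
  rw [f1, f2] at hΨ'e
  have hmemΨ : π - Ψ' ∈ Ioo 0 π := ⟨by linarith [hΨ'm.2], by linarith [hΨ'm.1]⟩
  have hΨval : Ψ = π - Ψ' :=
    balance_unique (c := c^2) (by positivity)
      (fun α _ => pow_le_pow_left₀ hc.le (hcr _ (sphP_norm α Θ)) 2)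
      (((hcont1 Θ).pow 2).intervalIntegrable 0 π) hΨ.1 hmemΨ hΨ.2 hΨ'e.symm
  have hΨ'v : Ψ' = π - Ψ := by linarith
  -- geometry
  have hL : shear Θ' Φ' Ψ' ⁻¹' (rotZ π '' K) = rotZ π ⁻¹' (shear Θ Φ Ψ ⁻¹' K) := by
    ext p
    rw [Set.mem_preimage, Set.mem_preimage, Set.mem_preimage,
      hΘ'v, hΦ'v, hΨ'v, shear_conj, mem_rot_image, rotZpi_invol]
  rw [hL]
  exact ⟨hΘ'v, hΦ'v, hΨ'v, Ffun_rot _, Gfun_rot _, Hfun_rot _⟩
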